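/- For λ ∈ (-1,1), the real vector space of 4×4 real symmetric matrices Θ satisfying H(λ)ᵀΘ = ΘH(λ) with the 4×4 discrete square-well Hamiltonian H(λ) has dimension exactly 4. -/

import Mathlib

open Matrix Polynomial

/-- The N×N discrete PT-symmetric square-well Hamiltonian (0-indexed). -/
noncomputable def Ham (N : ℕ) (l : ℝ) : Matrix (Fin N) (Fin N) ℝ :=
  Matrix.of fun i j =>
    if (i : ℕ) = j then 2
    else if (j : ℕ) = (i : ℕ) + 1 then
      (if (i : ℕ) = 0 then -1 - l else if (j : ℕ) = N - 1 then -1 + l else -1)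
    else if (i : ℕ) = (j : ℕ) + 1 then
      (if (j : ℕ) = 0 then -1 + l else if (i : ℕ) = N - 1 then -1 - l else -1)
    else 0

/-- The real vector space of symmetric solutions Θ of H(λ)ᵀ Θ = Θ H(λ). -/
noncomputable def solSpace (N : ℕ) (l : ℝ) : Submodule ℝ (Matrix (Fin N) (Fin N) ℝ) where
  carrier := {Θ | Θ.IsSymm ∧ (Ham N l)ᵀ * Θ = Θ * Ham N l}
  add_mem' := by
    rintro a b ⟨ha1, ha2⟩ ⟨hb1, hb2⟩
    refine ⟨?_, ?_⟩
    · show (a + b)ᵀ = a + b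
      rw [Matrix.transpose_add, ha1, hb1]
    · rw [Matrix.mul_add, Matrix.add_mul, ha2, hb2]
  zero_mem' := by
    refine ⟨?_, by simp⟩
    show (0 : Matrix (Fin N) (Fin N) ℝ)ᵀ = 0
    simp
  smul_mem' := by
    rintro c a ⟨ha1, ha2⟩
    refine ⟨?_, ?_⟩
    · show (c • a)ᵀ = c • a
      rw [Matrix.transpose_smul, ha1]
    · rw [Matrix.mul_smul, Matrix.smul_mul, ha2]


/-- Explicit solution matrix with prescribed values of `Θ 1 2, Θ 2 2, Θ 2 3, Θ 3 3`. -/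
noncomputable def solMat (l a b c d : ℝ) : Matrix (Fin 4) (Fin 4) ℝ :=
  !![d, c, b*(1-l)-d*(1+l), ((1-l)*a-c)/(1+l);
     c, b, a, b*(1-l)-d*(1+l);
     b*(1-l)-d*(1+l), a, b, c;
     ((1-l)*a-c)/(1+l), b*(1-l)-d*(1+l), c, d]

lemma solMat_mem (l : ℝ) (hs : (1:ℝ) + l ≠ 0) (a b c d : ℝ) :
    solMat l a b c d ∈ solSpace 4 l := by
  constructor
  · show (solMat l a b c d)ᵀ = solMat l a b c d
    ext i j
    fin_cases i <;> fin_cases j <;> simp [solMat]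
  · ext i j
    simp only [Ham, Matrix.mul_apply, Matrix.transpose_apply, Fin.sum_univ_four, Matrix.of_apply]
    fin_cases i <;> fin_cases j <;>
      · simp only [solMat, Fin.isValue, Fin.val_zero, Fin.val_one, Fin.val_two,
          show ((3:Fin 4):ℕ) = 3 from rfl, Matrix.cons_val', Matrix.cons_val_zero,
          Matrix.cons_val_one, Matrix.head_cons, Matrix.head_fin_const, Matrix.cons_val_fin_one,
          Matrix.empty_val', Matrix.cons_val_succ, Matrix.of_apply, Matrix.cons_val]
        try norm_num
        try first
          | (field_simp; ring)
          | ring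

theorem stmt12 (l : ℝ) (hl : l ∈ Set.Ioo (-1 : ℝ) 1) :
    Module.finrank ℝ (solSpace 4 l) = 4 := by
  obtain ⟨hl1, hl2⟩ := hl
  have hs : (1:ℝ) + l ≠ 0 := by linarith
  have hd : (1:ℝ) - l ≠ 0 := by linarith
  let f : solSpace 4 l →ₗ[ℝ] (Fin 4 → ℝ) :=
    { toFun := fun Θ => ![Θ.1 1 2, Θ.1 2 2, Θ.1 2 3, Θ.1 3 3]
      map_add' := by
        intro a b
        funext i
        fin_cases i <;> simp [Matrix.add_apply]
      map_smul' := by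
        intro c a
        funext i
        fin_cases i <;> simp [Matrix.smul_apply] }
  have hbij : Function.Bijective f := by
    constructor
    · rw [injective_iff_map_eq_zero]
      rintro ⟨Θ, hsym, heq⟩ h0
      have h12 : Θ 1 2 = 0 := congrFun h0 0
      have h22 : Θ 2 2 = 0 := congrFun h0 1
      have h23 : Θ 2 3 = 0 := congrFun h0 2
      have h33 : Θ 3 3 = 0 := congrFun h0 3
      have sym : ∀ i j, Θ j i = Θ i j := fun i j => congrFun (congrFun hsym i) j
      have E : ∀ i j : Fin 4, ((Ham 4 l)ᵀ * Θ) i j = (Θ * Ham 4 l) i j := fun i j =>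
        congrFun (congrFun heq i) j
      have e01 := E 0 1; have e02 := E 0 2; have e03 := E 0 3
      have e12 := E 1 2; have e13 := E 1 3; have e23 := E 2 3
      simp only [Ham, Matrix.mul_apply, Matrix.transpose_apply, Fin.sum_univ_four,
        Matrix.of_apply, Fin.isValue, Fin.val_zero, Fin.val_one, Fin.val_two,
        show ((3:Fin 4):ℕ) = 3 from rfl] at e01 e02 e03 e12 e13 e23
      norm_num at e01 e02 e03 e12 e13 e23
      have h13 : Θ 1 3 = 0 := by linear_combination -e23 - (1+l)*h33 - (l-1)*h22
      have h02 : Θ 0 2 = 0 := by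
        have h02' : (1 - l) * Θ 0 2 = 0 := by linear_combination e03 + (1-l)*h13
        exact (mul_eq_zero.mp h02').resolve_left hd
      have h11 : Θ 1 1 = 0 := by linear_combination e12 + (1+l)*h02 + h22 - (1+l)*h13
      have h00 : Θ 0 0 = 0 := by
        have h00' : (1 + l) * Θ 0 0 = 0 := by linear_combination e01 - (l-1)*h11 - h02
        exact (mul_eq_zero.mp h00').resolve_left hs
      have h03 : Θ 0 3 = 0 := by
        have h03' : (1 + l) * Θ 0 3 = 0 := by linear_combination -e13 - h23 - (l-1)*h12
        exact (mul_eq_zero.mp h03').resolve_left hs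
      have h01 : Θ 0 1 = 0 := by linear_combination e02 - (l-1)*h12 - (1+l)*h03
      have hz : Θ = 0 := by
        ext i j
        fin_cases i <;> fin_cases j <;>
          simp only [Matrix.zero_apply] <;>
          first
            | assumption
            | (rw [sym]; assumption)
      exact Subtype.ext hz
    · intro v
      refine ⟨⟨solMat l (v 0) (v 1) (v 2) (v 3), solMat_mem l hs _ _ _ _⟩, ?_⟩
      funext i
      fin_cases i <;> simp [f, solMat]
  have hrk := LinearEquiv.finrank_eq (LinearEquiv.ofBijective f hbij)
  rw [hrk]
  simp
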